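/- In the finite-noise, finite-partition setting, assume each map T_ℓ is one-to-one and Borel measurable. Suppose there exists a finite Borel measure μ̄ on X₁ that is equivalent to Lebesgue measure m on X₁ (μ̄(B) = 0 iff m(B) = 0 for Borel B ⊆ X₁) and satisfies [P₁ μ̄](B) := Σ_{ℓ=1}^Q p_ℓ μ̄(T_ℓ^{-1}(B) ∩ X₁) < μ̄(B) for every Borel B ⊆ X₁ with m(B) > 0. Then the matrix P₁ is transient: P₁^n → 0 entrywise as n → ∞. -/

import Mathlib

open MeasureTheory Filter Metric Set

noncomputable section

-- limsup of a finite sum of uniformly bounded nonneg sequences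
lemma my_limsup_sum_le {ι : Type*} (s : Finset ι) (g : ι → ℕ → ℝ)
    (h0 : ∀ k n, 0 ≤ g k n) (h1 : ∀ k n, g k n ≤ 1) :
    limsup (fun n => ∑ k ∈ s, g k n) atTop ≤ ∑ k ∈ s, limsup (g k) atTop := by
  classical
  induction s using Finset.induction_on with
  | empty => simp [limsup_const]
  | insert a s ha ih =>
    have hcongr : (fun n => ∑ k ∈ insert a s, g k n)
        = (g a + fun n => ∑ k ∈ s, g k n) := by
      funext n; simp [Finset.sum_insert ha]
    rw [hcongr, Finset.sum_insert ha]
    have hba : IsBoundedUnder (· ≥ ·) atTop (g a) :=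
      isBoundedUnder_of ⟨0, fun n => h0 a n⟩
    have hba' : IsBoundedUnder (· ≤ ·) atTop (g a) :=
      isBoundedUnder_of ⟨1, fun n => h1 a n⟩
    have hbs' : IsBoundedUnder (· ≤ ·) atTop (fun n => ∑ k ∈ s, g k n) :=
      isBoundedUnder_of ⟨(s.card : ℝ), fun n => by
        calc ∑ k ∈ s, g k n ≤ ∑ k ∈ s, 1 := Finset.sum_le_sum fun k _ => h1 k n
        _ = s.card := by simp⟩
    have hbs : IsCoboundedUnder (· ≤ ·) atTop (fun n => ∑ k ∈ s, g k n) :=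
      IsBoundedUnder.isCoboundedUnder_le
        (isBoundedUnder_of ⟨0, fun n => Finset.sum_nonneg fun k _ => h0 k n⟩)
    exact le_trans (limsup_add_le hba hba' hbs hbs') (by gcongr)

lemma my_limsup_const_mul (u : ℕ → ℝ) (c : ℝ) (hc : 0 ≤ c)
    (h0 : ∀ n, 0 ≤ u n) (h1 : ∀ n, u n ≤ 1) :
    limsup (fun n => c * u n) atTop ≤ c * limsup u atTop := by
  rcases hc.eq_or_lt with h | h
  · simp [← h, limsup_const]
  · have hb : IsBoundedUnder (· ≤ ·) atTop u := isBoundedUnder_of ⟨1, h1⟩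
    have hcob : IsCoboundedUnder (· ≤ ·) atTop u :=
      IsBoundedUnder.isCoboundedUnder_le (isBoundedUnder_of ⟨0, h0⟩)
    have hgb : IsBoundedUnder (· ≤ ·) atTop (fun n => c * u n) :=
      isBoundedUnder_of ⟨c, fun n => by nlinarith [h1 n]⟩
    have hgcob : IsCoboundedUnder (· ≤ ·) atTop (fun n => c * u n) :=
      IsBoundedUnder.isCoboundedUnder_le
        (isBoundedUnder_of ⟨0, fun n => mul_nonneg h.le (h0 n)⟩)
    have := (OrderIso.mulLeft₀ c h).limsup_apply (u := u) (f := atTop) hb hcob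
      (by simpa [OrderIso.mulLeft₀_apply] using hgb)
      (by simpa [OrderIso.mulLeft₀_apply] using hgcob)
    simp only [OrderIso.mulLeft₀_apply] at this
    exact this.ge

lemma exists_fixed_row_vector {L : ℕ} (M : Matrix (Fin L) (Fin L) ℝ)
    (hnn : ∀ i j, 0 ≤ M i j) (hrow : ∀ i, ∑ j, M i j ≤ 1)
    (i₀ j₀ : Fin L) (h : ¬ Tendsto (fun n => (M ^ n) i₀ j₀) atTop (nhds (0 : ℝ))) :
    ∃ v : Fin L → ℝ, (∀ j, 0 ≤ v j) ∧ (∃ j, 0 < v j) ∧ ∀ j, v j = ∑ k, v k * M k j := by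
  have hpnn : ∀ n i j, 0 ≤ (M ^ n) i j := by
    intro n
    induction n with
    | zero => intro i j; rw [pow_zero, Matrix.one_apply]; split <;> norm_num
    | succ n ih =>
      intro i j; rw [pow_succ, Matrix.mul_apply]
      exact Finset.sum_nonneg fun k _ => mul_nonneg (ih i k) (hnn k j)
  have hprow : ∀ n i, ∑ j, (M ^ n) i j ≤ 1 := by
    intro n
    induction n with
    | zero => intro i; simp [Matrix.one_apply]
    | succ n ih =>
      intro i
      calc ∑ j, (M ^ (n + 1)) i j = ∑ j, ∑ k, (M ^ n) i k * M k j := by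
            simp [pow_succ, Matrix.mul_apply]
        _ = ∑ k, (M ^ n) i k * ∑ j, M k j := by
            rw [Finset.sum_comm]; simp [Finset.mul_sum]
        _ ≤ ∑ k, (M ^ n) i k * 1 :=
            Finset.sum_le_sum fun k _ => mul_le_mul_of_nonneg_left (hrow k) (hpnn n i k)
        _ ≤ 1 := by simpa using ih i
  have hple : ∀ n i j, (M ^ n) i j ≤ 1 := fun n i j =>
    le_trans (Finset.single_le_sum (fun k _ => hpnn n i k) (Finset.mem_univ j)) (hprow n i)
  obtain ⟨ε, hε, hfreq⟩ : ∃ ε > 0, ∃ᶠ n in atTop, ε ≤ (M ^ n) i₀ j₀ := by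
    by_contra hc
    push_neg at hc
    apply h
    rw [Metric.tendsto_atTop]
    intro ε hε
    have h2 := hc ε hε
    rw [eventually_atTop] at h2
    obtain ⟨N, hN⟩ := h2
    refine ⟨N, fun n hn => ?_⟩
    rw [Real.dist_eq, sub_zero, abs_of_nonneg (hpnn n i₀ j₀)]
    exact hN n hn
  set v : Fin L → ℝ := fun j => limsup (fun n => (M ^ n) i₀ j) atTop with hv
  have hbj : ∀ j, IsBoundedUnder (· ≤ ·) atTop fun n => (M ^ n) i₀ j :=
    fun j => isBoundedUnder_of ⟨1, fun n => hple n i₀ j⟩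
  have hv0 : ∀ j, 0 ≤ v j := fun j =>
    le_limsup_of_frequently_le (Frequently.of_forall fun n => hpnn n i₀ j) (hbj j)
  have hvpos : 0 < v j₀ := lt_of_lt_of_le hε (le_limsup_of_frequently_le hfreq (hbj j₀))
  have hsf : ∀ j, v j ≤ ∑ k, v k * M k j := by
    intro j
    have h1 : v j = limsup (fun n => (M ^ (n + 1)) i₀ j) atTop := (limsup_nat_add _ 1).symm
    have h2 : (fun n => (M ^ (n + 1)) i₀ j) = fun n => ∑ k, M k j * (M ^ n) i₀ k := by
      funext n; rw [pow_succ, Matrix.mul_apply]; simp_rw [mul_comm]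
    rw [h1, h2]
    calc limsup (fun n => ∑ k, M k j * (M ^ n) i₀ k) atTop
        ≤ ∑ k, limsup (fun n => M k j * (M ^ n) i₀ k) atTop := by
          refine my_limsup_sum_le Finset.univ (fun k n => M k j * (M ^ n) i₀ k)
            (fun k n => mul_nonneg (hnn k j) (hpnn n i₀ k)) (fun k n => ?_)
          have h3 : M k j ≤ 1 := by
            have := hple 1 k j; rwa [pow_one] at this
          show M k j * (M ^ n) i₀ k ≤ 1
          nlinarith [hpnn n i₀ k, hple n i₀ k, hnn k j]
      _ ≤ ∑ k, M k j * v k :=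
          Finset.sum_le_sum fun k _ => my_limsup_const_mul _ _ (hnn k j)
            (fun n => hpnn n i₀ k) (fun n => hple n i₀ k)
      _ = ∑ k, v k * M k j := by simp_rw [mul_comm]
  have htot : ∑ j, (∑ k, v k * M k j) ≤ ∑ j, v j := by
    calc ∑ j, ∑ k, v k * M k j = ∑ k, v k * ∑ j, M k j := by
          rw [Finset.sum_comm]; simp [Finset.mul_sum]
      _ ≤ ∑ k, v k * 1 :=
          Finset.sum_le_sum fun k _ => mul_le_mul_of_nonneg_left (hrow k) (hv0 k)
      _ = ∑ j, v j := by simp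
  refine ⟨v, hv0, ⟨j₀, hvpos⟩, fun j => ?_⟩
  by_contra hne
  have hlt : v j < ∑ k, v k * M k j := (hsf j).lt_of_ne hne
  have := Finset.sum_lt_sum (fun i (_ : i ∈ Finset.univ) => hsf i)
    ⟨j, Finset.mem_univ j, hlt⟩
  linarith
/-- finite-noise, finite-partition setting. If there is a finite measure `μ̄`
on `X₁`, equivalent to Lebesgue measure on `X₁`, with
`[P₁ μ̄](B) = Σ_ℓ p_ℓ μ̄(T_ℓ⁻¹(B) ∩ X₁) < μ̄(B)` for every Borel `B ⊆ X₁` with `m(B) > 0`,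
then the sub-Markov matrix `P₁` is transient: `P₁ⁿ → 0` entrywise. -/
theorem matrix_transient_of_lyapunov_measure
    {d : ℕ} (X : Set (EuclideanSpace ℝ (Fin d))) (hX : IsCompact X)
    (Q L : ℕ)
    -- the finitely many noise values, with probabilities `p ℓ`
    (p : Fin Q → ℝ) (hp : ∀ ℓ, 0 < p ℓ) (hpsum : ∑ ℓ, p ℓ = 1)
    (Tl : Fin Q → EuclideanSpace ℝ (Fin d) → EuclideanSpace ℝ (Fin d))
    (hTmeas : ∀ ℓ, Measurable (Tl ℓ))
    (hTmaps : ∀ ℓ, MapsTo (Tl ℓ) X X)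
    (hTinj : ∀ ℓ, InjOn (Tl ℓ) X)
    -- the partition `{D_2,…,D_L}` of `X₁ = X \ X₀`
    (X₀ : Set (EuclideanSpace ℝ (Fin d))) (hX₀ : X₀ ⊆ X)
    (D : Fin L → Set (EuclideanSpace ℝ (Fin d)))
    (hDmeas : ∀ i, MeasurableSet (D i))
    (hDdisj : Pairwise fun i j => Disjoint (D i) (D j))
    (hDpos : ∀ i, 0 < volume (D i)) (hDfin : ∀ i, volume (D i) < ⊤)
    (hDunion : (⋃ i, D i) = X \ X₀)
    -- the sub-Markov matrix `P₁`
    (P₁ : Matrix (Fin L) (Fin L) ℝ)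
    (hP₁ : ∀ i j, P₁ i j =
      ∑ ℓ, p ℓ * ((volume ((Tl ℓ) ⁻¹' (D j) ∩ D i)).toReal / (volume (D i)).toReal))
    -- the Lyapunov measure `μ̄`, equivalent to Lebesgue measure on `X₁`
    (μbar : Measure (EuclideanSpace ℝ (Fin d))) [IsFiniteMeasure μbar]
    (hequiv : ∀ B : Set (EuclideanSpace ℝ (Fin d)), MeasurableSet B → B ⊆ X \ X₀ →
      (μbar B = 0 ↔ volume B = 0))
    (hlyap : ∀ B : Set (EuclideanSpace ℝ (Fin d)), MeasurableSet B → B ⊆ X \ X₀ →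
      0 < volume B →
      ∑ ℓ, ENNReal.ofReal (p ℓ) * μbar ((Tl ℓ) ⁻¹' B ∩ (X \ X₀)) < μbar B) :
    ∀ i j, Tendsto (fun n => (P₁ ^ n) i j) atTop (nhds (0 : ℝ)) := by
  classical
  intro i₀ j₀
  by_contra hten
  -- basic facts about the volumes of the cells
  have hVpos : ∀ a, 0 < (volume (D a)).toReal := fun a =>
    ENNReal.toReal_pos (hDpos a).ne' (hDfin a).ne
  have hsubfin : ∀ (S : Set (EuclideanSpace ℝ (Fin d))) a, volume (S ∩ D a) < ⊤ := fun S a =>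
    lt_of_le_of_lt (measure_mono inter_subset_right) (hDfin a)
  have hratio_nn : ∀ (S : Set (EuclideanSpace ℝ (Fin d))) a,
      0 ≤ (volume (S ∩ D a)).toReal / (volume (D a)).toReal := fun S a =>
    div_nonneg ENNReal.toReal_nonneg ENNReal.toReal_nonneg
  have hratio_le : ∀ (S : Set (EuclideanSpace ℝ (Fin d))) a,
      (volume (S ∩ D a)).toReal / (volume (D a)).toReal ≤ 1 := by
    intro S a
    rw [div_le_one (hVpos a)]
    exact ENNReal.toReal_mono (hDfin a).ne (measure_mono inter_subset_right)
  -- `P₁` has nonnegative entries and substochastic rows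
  have hnn : ∀ a b, 0 ≤ P₁ a b := by
    intro a b
    rw [hP₁]
    exact Finset.sum_nonneg fun ℓ _ => mul_nonneg (hp ℓ).le (hratio_nn _ _)
  have hdisj_pre : ∀ (ℓ : Fin Q) (a : Fin L) (t : Finset (Fin L)),
      (t : Set (Fin L)).PairwiseDisjoint (fun b => (Tl ℓ) ⁻¹' (D b) ∩ D a) := by
    intro ℓ a t x _ y _ hxy
    exact ((hDdisj hxy).preimage _).mono inter_subset_left inter_subset_left
  have hpremeas : ∀ (ℓ : Fin Q) (b a : Fin L),
      MeasurableSet ((Tl ℓ) ⁻¹' (D b) ∩ D a) := fun ℓ b a =>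
    ((hTmeas ℓ) (hDmeas b)).inter (hDmeas a)
  have hkey : ∀ (ℓ : Fin Q) (a : Fin L) (t : Finset (Fin L)),
      ∑ b ∈ t, (volume ((Tl ℓ) ⁻¹' (D b) ∩ D a)).toReal ≤ (volume (D a)).toReal := by
    intro ℓ a t
    rw [← ENNReal.toReal_sum (fun b _ => (hsubfin _ a).ne)]
    apply ENNReal.toReal_mono (hDfin a).ne
    rw [← measure_biUnion_finset (hdisj_pre ℓ a t) (fun b _ => hpremeas ℓ b a)]
    exact measure_mono (iUnion₂_subset fun b _ => inter_subset_right)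
  have hrow : ∀ a, ∑ b, P₁ a b ≤ 1 := by
    intro a
    have : ∑ b, P₁ a b
        = ∑ ℓ, p ℓ * ((∑ b, (volume ((Tl ℓ) ⁻¹' (D b) ∩ D a)).toReal) / (volume (D a)).toReal) := by
      simp_rw [hP₁, Finset.sum_div, Finset.mul_sum]
      rw [Finset.sum_comm]
    rw [this]
    calc ∑ ℓ, p ℓ * ((∑ b, (volume ((Tl ℓ) ⁻¹' (D b) ∩ D a)).toReal) / (volume (D a)).toReal)
        ≤ ∑ ℓ, p ℓ * 1 := by
          refine Finset.sum_le_sum fun ℓ _ => mul_le_mul_of_nonneg_left ?_ (hp ℓ).le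
          rw [div_le_one (hVpos a)]
          exact hkey ℓ a Finset.univ
      _ = 1 := by simp only [mul_one]; exact hpsum
  -- extract a nonnegative fixed row vector of `P₁`
  obtain ⟨v, hv0, ⟨j₁, hj₁⟩, hfix⟩ := exists_fixed_row_vector P₁ hnn hrow i₀ j₀ hten
  -- the piecewise-uniform "measure" associated with `v`
  set ν : Set (EuclideanSpace ℝ (Fin d)) → ℝ :=
    fun S => ∑ a, v a * ((volume (S ∩ D a)).toReal / (volume (D a)).toReal) with hν
  have hK : ∀ b, ∑ ℓ, p ℓ * ν ((Tl ℓ) ⁻¹' (D b)) = v b := by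
    intro b
    have h1 : ∑ ℓ, p ℓ * ν ((Tl ℓ) ⁻¹' (D b)) = ∑ a, v a * P₁ a b := by
      simp_rw [hν, Finset.mul_sum, hP₁]
      rw [Finset.sum_comm]
      exact Finset.sum_congr rfl fun a _ => by rw [Finset.mul_sum]; exact Finset.sum_congr rfl fun ℓ _ => by ring
    rw [h1, ← hfix b]
  set s : Finset (Fin L) := Finset.univ.filter (fun a => 0 < v a) with hs
  set A : Set (EuclideanSpace ℝ (Fin d)) := ⋃ a ∈ s, D a with hA
  set W : ℝ := ∑ a, v a with hWdef
  have hvzero : ∀ a, a ∉ s → v a = 0 := by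
    intro a ha
    rw [hs] at ha
    simp only [Finset.mem_filter, Finset.mem_univ, true_and, not_lt] at ha
    exact le_antisymm ha (hv0 a)
  have hWs : ∑ a ∈ s, v a = W := by
    rw [hWdef]
    exact Finset.sum_subset (Finset.subset_univ s) (fun a _ ha => hvzero a ha)
  have hνle : ∀ S, ν S ≤ W := by
    intro S
    calc ν S ≤ ∑ a, v a * 1 :=
          Finset.sum_le_sum fun a _ => mul_le_mul_of_nonneg_left (hratio_le S a) (hv0 a)
      _ = W := by simp [hWdef]
  have hν_add : ∀ ℓ, ν ((Tl ℓ) ⁻¹' A) = ∑ b ∈ s, ν ((Tl ℓ) ⁻¹' (D b)) := by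
    intro ℓ
    have hvol : ∀ a, volume ((Tl ℓ) ⁻¹' A ∩ D a)
        = ∑ b ∈ s, volume ((Tl ℓ) ⁻¹' (D b) ∩ D a) := by
      intro a
      have hpre : (Tl ℓ) ⁻¹' A ∩ D a = ⋃ b ∈ s, ((Tl ℓ) ⁻¹' (D b) ∩ D a) := by
        rw [hA]
        simp only [preimage_iUnion]
        rw [iUnion₂_inter]
      rw [hpre]
      exact measure_biUnion_finset (hdisj_pre ℓ a s) (fun b _ => hpremeas ℓ b a)
    simp only [hν]
    calc ∑ a, v a * ((volume ((Tl ℓ) ⁻¹' A ∩ D a)).toReal / (volume (D a)).toReal)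
        = ∑ a, v a * ((∑ b ∈ s, (volume ((Tl ℓ) ⁻¹' (D b) ∩ D a)).toReal) / (volume (D a)).toReal) := by
          refine Finset.sum_congr rfl fun a _ => ?_
          rw [hvol a, ENNReal.toReal_sum (fun b _ => (hsubfin _ a).ne)]
      _ = ∑ b ∈ s, ∑ a, v a * ((volume ((Tl ℓ) ⁻¹' (D b) ∩ D a)).toReal / (volume (D a)).toReal) := by
          simp_rw [Finset.sum_div, Finset.mul_sum]
          rw [Finset.sum_comm]
  have hG : ∑ ℓ, p ℓ * ν ((Tl ℓ) ⁻¹' A) = W := by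
    calc ∑ ℓ, p ℓ * ν ((Tl ℓ) ⁻¹' A)
        = ∑ b ∈ s, ∑ ℓ, p ℓ * ν ((Tl ℓ) ⁻¹' (D b)) := by
          simp_rw [hν_add, Finset.mul_sum]
          rw [Finset.sum_comm]
      _ = ∑ b ∈ s, v b := Finset.sum_congr rfl fun b _ => hK b
      _ = W := hWs
  have hI : ∀ ℓ, ν ((Tl ℓ) ⁻¹' A) = W := by
    intro ℓ
    by_contra hne
    have hlt : p ℓ * ν ((Tl ℓ) ⁻¹' A) < p ℓ * W :=
      mul_lt_mul_of_pos_left ((hνle _).lt_of_ne hne) (hp ℓ)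
    have hstrict := Finset.sum_lt_sum (f := fun ℓ' => p ℓ' * ν ((Tl ℓ') ⁻¹' A))
      (g := fun ℓ' => p ℓ' * W)
      (fun ℓ' (_ : ℓ' ∈ Finset.univ) => mul_le_mul_of_nonneg_left (hνle _) (hp ℓ').le)
      ⟨ℓ, Finset.mem_univ ℓ, hlt⟩
    rw [hG, ← Finset.sum_mul, hpsum, one_mul] at hstrict
    exact lt_irrefl W hstrict
  have hSmeas : ∀ ℓ, MeasurableSet ((Tl ℓ) ⁻¹' A) := by
    intro ℓ
    exact (hTmeas ℓ) (s.measurableSet_biUnion (fun a _ => hDmeas a))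
  have hJ : ∀ ℓ, ∀ a ∈ s, volume (D a \ (Tl ℓ) ⁻¹' A) = 0 := by
    intro ℓ a ha
    have hva : 0 < v a := by
      rw [hs] at ha
      simpa using (Finset.mem_filter.mp ha).2
    -- termwise equality in `hI ℓ`
    have heq : v a * ((volume ((Tl ℓ) ⁻¹' A ∩ D a)).toReal / (volume (D a)).toReal) = v a * 1 := by
      by_contra hne
      have hle' : ∀ a' ∈ Finset.univ,
          v a' * ((volume ((Tl ℓ) ⁻¹' A ∩ D a')).toReal / (volume (D a')).toReal) ≤ v a' * 1 :=
        fun a' _ => mul_le_mul_of_nonneg_left (hratio_le _ a') (hv0 a')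
      have hlt : v a * ((volume ((Tl ℓ) ⁻¹' A ∩ D a)).toReal / (volume (D a)).toReal) < v a * 1 :=
        (hle' a (Finset.mem_univ a)).lt_of_ne hne
      have hstrict := Finset.sum_lt_sum hle' ⟨a, Finset.mem_univ a, hlt⟩
      have hIl := hI ℓ
      simp only [hν] at hIl
      rw [hIl] at hstrict
      simp only [mul_one] at hstrict
      rw [hWdef] at hstrict
      exact lt_irrefl _ hstrict
    have hra' := mul_left_cancel₀ hva.ne' heq
    rw [mul_one] at heq
    have hra := hra'
    have hnum : volume ((Tl ℓ) ⁻¹' A ∩ D a) = volume (D a) := by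
      rw [div_eq_one_iff_eq (hVpos a).ne'] at hra
      exact (ENNReal.toReal_eq_toReal_iff' (hsubfin _ a).ne (hDfin a).ne).mp hra
    have h2 := measure_inter_add_diff (μ := volume) (D a) (hSmeas ℓ)
    rw [inter_comm] at h2
    rw [hnum] at h2
    have h3 : volume (D a) + volume (D a \ (Tl ℓ) ⁻¹' A) = volume (D a) + 0 := by
      rw [add_zero, h2]
    exact (ENNReal.add_right_inj (hDfin a).ne).mp h3
  have hK2 : ∀ ℓ, volume (A \ (Tl ℓ) ⁻¹' A) = 0 := by
    intro ℓ
    have hsub : A \ (Tl ℓ) ⁻¹' A ⊆ ⋃ a ∈ s, (D a \ (Tl ℓ) ⁻¹' A) := by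
      intro x hx
      obtain ⟨a, ha, hxa⟩ := mem_iUnion₂.mp hx.1
      exact mem_iUnion₂.mpr ⟨a, ha, hxa, hx.2⟩
    refine le_antisymm ?_ (zero_le)
    refine le_trans (measure_mono hsub) ?_
    refine le_trans (measure_biUnion_finset_le s _) ?_
    rw [Finset.sum_eq_zero (fun a ha => hJ ℓ a ha)]
  have hAmeas : MeasurableSet A := s.measurableSet_biUnion (fun a _ => hDmeas a)
  have hAsub : A ⊆ X \ X₀ := by
    intro x hx
    obtain ⟨a, _, hxa⟩ := mem_iUnion₂.mp hx
    rw [← hDunion]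
    exact mem_iUnion_of_mem a hxa
  have hApos : 0 < volume A := by
    have hj₁s : j₁ ∈ s := by
      rw [hs]; simp [hj₁]
    exact lt_of_lt_of_le (hDpos j₁) (measure_mono (subset_biUnion_of_mem hj₁s))
  have hge : ∀ ℓ, μbar A ≤ μbar ((Tl ℓ) ⁻¹' A ∩ (X \ X₀)) := by
    intro ℓ
    have hz : μbar (A \ (Tl ℓ) ⁻¹' A) = 0 :=
      (hequiv _ (hAmeas.diff (hSmeas ℓ)) (diff_subset.trans hAsub)).mpr (hK2 ℓ)
    calc μbar A ≤ μbar (A ∩ (Tl ℓ) ⁻¹' A) + μbar (A \ (Tl ℓ) ⁻¹' A) :=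
          measure_le_inter_add_diff μbar A _
      _ = μbar (A ∩ (Tl ℓ) ⁻¹' A) := by rw [hz, add_zero]
      _ ≤ μbar ((Tl ℓ) ⁻¹' A ∩ (X \ X₀)) :=
          measure_mono (fun x hx => ⟨hx.2, hAsub hx.1⟩)
  have hfinal := hlyap A hAmeas hAsub hApos
  have hcontra : μbar A ≤ ∑ ℓ, ENNReal.ofReal (p ℓ) * μbar ((Tl ℓ) ⁻¹' A ∩ (X \ X₀)) := by
    calc μbar A = ∑ ℓ, ENNReal.ofReal (p ℓ) * μbar A := by
          rw [← Finset.sum_mul, ← ENNReal.ofReal_sum_of_nonneg (fun ℓ _ => (hp ℓ).le), hpsum,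
            ENNReal.ofReal_one, one_mul]
      _ ≤ _ := Finset.sum_le_sum fun ℓ _ => mul_le_mul_right (hge ℓ) _
  exact absurd hfinal (not_lt.mpr hcontra)
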